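/- For a triangle functor F : A → B, condition (SM) holds if and only if F factors as F = F₂ ∘ F₁ where F₁ is a full triangle functor and F₂ is a faithful triangle functor. Moreover in that case one may take F₁ full and dense (namely F₁ = V_F and F₂ = F̃). -/

import Mathlib

open CategoryTheory CategoryTheory.Limits CategoryTheory.Pretriangulated

universe v₁ v₂ u₁ u₂

variable {A : Type u₁} {B : Type u₂} [Category.{v₁} A] [Category.{v₂} B]
  [Preadditive A] [Preadditive B] [HasZeroObject A] [HasZeroObject B]
  [HasShift A ℤ] [HasShift B ℤ]
  [∀ n : ℤ, (shiftFunctor A n).Additive] [∀ n : ℤ, (shiftFunctor B n).Additive]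
  [Pretriangulated A] [Pretriangulated B] [IsTriangulated A] [IsTriangulated B]


/-- A factorization `F ≅ F₁ ⋙ F₂` of a triangle functor through a triangulated
category, with `F₁` a full triangle functor and `F₂` a faithful triangle functor. -/
structure TriangleFactorization (F : A ⥤ B) where
  Q : Type (max u₁ v₁)
  [cat : Category.{max u₁ v₁} Q]
  [pre : Preadditive Q]
  [zq : HasZeroObject Q]
  [sh : HasShift Q ℤ]
  [shAdd : ∀ n : ℤ, (shiftFunctor Q n).Additive]
  [pt : Pretriangulated Q]
  F₁ : A ⥤ Q
  F₂ : Q ⥤ B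
  [cs₁ : F₁.CommShift ℤ]
  [cs₂ : F₂.CommShift ℤ]
  [tr₁ : F₁.IsTriangulated]
  [tr₂ : F₂.IsTriangulated]
  full : F₁.Full
  faithful : F₂.Faithful
  iso : F₁ ⋙ F₂ ≅ F

/-- As above, with `F₁` moreover dense (essentially surjective). -/
structure DenseTriangleFactorization (F : A ⥤ B) extends TriangleFactorization F where
  dense : F₁.EssSurj

namespace Stmt17Aux

open ZeroObject

section Generic

variable {C : Type*} [Category C] [Preadditive C] [HasZeroObject C] [HasShift C ℤ]
  [∀ n : ℤ, (shiftFunctor C n).Additive] [Pretriangulated C]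

lemma isSplitMono₁ (T : Triangle C) (hT : T ∈ distTriang C) (h : T.mor₃ = 0) :
    IsSplitMono T.mor₁ := by
  obtain ⟨g, hg⟩ := Triangle.yoneda_exact₂ _ (inv_rot_of_distTriang _ hT) (𝟙 T.obj₁)
    (by simp [h]; exact zero_comp)
  exact ⟨⟨{ retraction := g, id := hg.symm }⟩⟩

lemma isSplitMono₂ (T : Triangle C) (hT : T ∈ distTriang C) (h : T.mor₁ = 0) :
    IsSplitMono T.mor₂ :=
  isSplitMono₁ T.rotate (rot_of_distTriang _ hT) (by simp [h]; rfl)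

end Generic

section Main

variable (F : A ⥤ B) [F.CommShift ℤ] [F.IsTriangulated]

/-- The condition (SM). -/
def SM : Prop := ∀ (X Y : A) (u : X ⟶ Y), IsSplitMono (F.map u) →
  ∃ u' : Y ⟶ X, F.map (u ≫ u') = 𝟙 (F.obj X)

variable {F}

lemma two_sided (hSM : SM F) {X Y : A} (g : X ⟶ Y) (hg : IsIso (F.map g)) :
    ∃ g' : Y ⟶ X, F.map (g ≫ g') = 𝟙 (F.obj X) ∧ F.map (g' ≫ g) = 𝟙 (F.obj Y) := by
  obtain ⟨g', h₁⟩ := hSM _ _ g ⟨⟨{ retraction := inv (F.map g), id := by simp }⟩⟩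
  refine ⟨g', h₁, ?_⟩
  rw [F.map_comp] at h₁ ⊢
  have h2 : inv (F.map g) = F.map g' := IsIso.inv_eq_of_hom_inv_id h₁
  rw [← h2, IsIso.inv_hom_id]

lemma shift_isZero {N : A} (hN : IsZero (F.obj N)) (n : ℤ) :
    IsZero (F.obj (N⟦n⟧)) := by
  have h : IsZero ((F.obj N)⟦n⟧) := by
    rw [IsZero.iff_id_eq_zero] at hN ⊢
    calc 𝟙 ((F.obj N)⟦n⟧) = (shiftFunctor B n).map (𝟙 (F.obj N)) :=
          ((shiftFunctor B n).map_id _).symm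
      _ = 0 := by rw [hN, Functor.map_zero]
  exact h.of_iso ((F.commShiftIso n).app N)

lemma factorThroughZero (hSM : SM F) {X Y : A} (f : X ⟶ Y) (hf : F.map f = 0) :
    ∃ (M : A) (α : X ⟶ M) (β : M ⟶ Y), IsZero (F.obj M) ∧ f = α ≫ β := by
  obtain ⟨Z, v, w, hT⟩ := Pretriangulated.distinguished_cocone_triangle f
  have hsm : IsSplitMono (F.map v) :=
    isSplitMono₂ _ (F.map_distinguished _ hT) hf
  obtain ⟨v', hv'⟩ := hSM _ _ v hsm
  obtain ⟨N, q, ρ, hTu⟩ := Pretriangulated.distinguished_cocone_triangle (v ≫ v')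
  have hNz : IsZero (F.obj N) :=
    Triangle.isZero₃_of_isIso₁ _ (F.map_distinguished _ hTu)
      (by
        have : IsIso (F.map (v ≫ v')) := by rw [hv']; infer_instance
        exact this)
  have hfv : f ≫ v = 0 := comp_distTriang_mor_zero₁₂ _ hT
  have hfu : f ≫ (v ≫ v') = 0 := by rw [← Category.assoc, hfv, zero_comp]
  obtain ⟨α, hα⟩ := Triangle.coyoneda_exact₂ _ (inv_rot_of_distTriang _ hTu) f hfu
  exact ⟨N⟦(-1 : ℤ)⟧, α, _, shift_isZero hNz _, hα⟩

variable (F) in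
/-- The kernel of `F` as a triangulated subcategory of `A`. -/
def S : ObjectProperty A := fun X => IsZero (F.obj X)

variable (F) in
instance S_isTriangulated : (S F).IsTriangulated where
  exists_zero := ⟨0, isZero_zero A,
    (by
      show IsZero (F.obj (0 : A))
      rw [IsZero.iff_id_eq_zero,
        show 𝟙 (F.obj (0 : A)) = F.map (𝟙 (0 : A)) from (F.map_id _).symm,
        Limits.id_zero, F.map_zero])⟩
  isStableUnderShiftBy n := ⟨fun X hX => shift_isZero hX n⟩
  ext₂' T hT h₁ h₃ := ObjectProperty.le_isoClosure _ _
    (Triangle.isZero₂_of_isZero₁₃ _ (F.map_distinguished _ hT) h₁ h₃)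

lemma W_inverted : (S F).trW.IsInvertedBy F := by
  intro X Y f hf
  obtain ⟨Z, g, h, hT, hZ⟩ := hf
  exact (Triangle.isZero₃_iff_isIso₁ _ (F.map_distinguished _ hT)).1 hZ

attribute [local instance] uliftCategory in
variable (F) in
lemma exists_dense (hSM : SM F) : Nonempty (DenseTriangleFactorization F) := by
  let W := (S F).trW
  let Q := ULiftHom.{max u₁ v₁} (ULift.{v₁} W.Localization)
  let e : W.Localization ≌ Q :=
    ULiftHomULiftCategory.equiv.{max u₁ v₁, v₁} W.Localization
  let L : A ⥤ Q := W.Q ⋙ e.functor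
  haveI hLoc : L.IsLocalization W :=
    inferInstanceAs ((W.Q ⋙ e.functor).IsLocalization W)
  letI : Preadditive Q := Localization.preadditive L W
  haveI : L.Additive := Localization.functor_additive L W
  haveI : L.EssSurj := Localization.essSurj L W
  haveI : HasZeroObject Q := L.hasZeroObject_of_additive
  letI : HasShift Q ℤ := HasShift.localized L W ℤ
  letI : L.CommShift ℤ := Functor.CommShift.localized L W ℤ
  haveI : ∀ n : ℤ, (shiftFunctor Q n).Additive := fun n => by
    rw [Localization.functor_additive_iff L W]
    exact Functor.additive_of_iso (L.commShiftIso n)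
  letI : Pretriangulated Q := Triangulated.Localization.pretriangulated L W
  haveI : L.IsTriangulated := Triangulated.Localization.isTriangulated_functor L W
  let F₂ : Q ⥤ B := Localization.lift F (W_inverted (F := F)) L
  letI : F₂.CommShift ℤ := Functor.commShiftOfLocalization L W ℤ F F₂
  haveI : L.mapArrow.EssSurj := Localization.essSurj_mapArrow L W
  haveI : NatTrans.CommShift (Localization.Lifting.iso L W F F₂).hom ℤ :=
    NatTrans.commShift_iso_hom_of_localization L W ℤ F F₂
  haveI : F₂.IsTriangulated :=
    Functor.isTriangulated_of_precomp_iso (Localization.Lifting.iso L W F F₂)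
  -- objects of the kernel are sent to zero objects
  have hLzero : ∀ (N : A), IsZero (F.obj N) → IsZero (L.obj N) := by
    intro N hN
    have hW : W (0 : N ⟶ 0) :=
      ⟨N⟦(1 : ℤ)⟧, 0, (contractibleTriangle N).rotate.mor₃,
        rot_of_distTriang _ (contractible_distinguished N), shift_isZero hN 1⟩
    haveI := Localization.inverts L W _ hW
    rw [IsZero.iff_id_eq_zero, ← cancel_mono (L.map (0 : N ⟶ 0))]
    simp
  have hLeq : ∀ {X Y : A} (f g : X ⟶ Y), F.map f = F.map g → L.map f = L.map g := by
    intro X Y f g h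
    obtain ⟨M, α, β, hM, hfac⟩ := factorThroughZero hSM (f - g)
      (by rw [F.map_sub, h, sub_self])
    have hz : L.map (f - g) = 0 := by
      rw [hfac, L.map_comp, (hLzero M hM).eq_of_src (L.map β) 0, comp_zero]
    rw [L.map_sub] at hz
    exact sub_eq_zero.1 hz
  haveI : L.Full := by
    constructor
    intro X Y φ
    obtain ⟨α, hα⟩ := Localization.exists_leftFraction L W φ
    have hiso : IsIso (F.map α.s) := W_inverted (F := F) _ α.hs
    obtain ⟨s', h1, h2⟩ := two_sided hSM α.s hiso
    refine ⟨α.f ≫ s', ?_⟩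
    haveI : IsIso (L.map α.s) := Localization.inverts L W _ α.hs
    rw [hα, ← cancel_mono (L.map α.s), MorphismProperty.LeftFraction.map_comp_map_s,
      ← L.map_comp]
    apply hLeq
    rw [Category.assoc, F.map_comp, h2, Category.comp_id]
  haveI : F₂.Faithful := by
    constructor
    intro P P' φ ψ h
    set ι := Localization.Lifting.iso L W F F₂ with hι
    let eP := L.objObjPreimageIso P
    let eP' := L.objObjPreimageIso P'
    obtain ⟨f, hf⟩ := L.map_surjective (eP.hom ≫ φ ≫ eP'.inv)
    obtain ⟨g, hg⟩ := L.map_surjective (eP.hom ≫ ψ ≫ eP'.inv)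
    have h2 : F₂.map (L.map f) = F₂.map (L.map g) := by
      rw [hf, hg]
      simp only [Functor.map_comp, h]
    have n1 := ι.hom.naturality f
    have n2 := ι.hom.naturality g
    simp only [Functor.comp_map] at n1 n2
    have key : F.map f = F.map g := by
      rw [← cancel_epi (ι.hom.app _), ← n1, ← n2, h2]
    have hL : L.map f = L.map g := hLeq _ _ key
    rw [hf, hg] at hL
    calc φ = eP.inv ≫ (eP.hom ≫ φ ≫ eP'.inv) ≫ eP'.hom := by simp
      _ = eP.inv ≫ (eP.hom ≫ ψ ≫ eP'.inv) ≫ eP'.hom := by rw [hL]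
      _ = ψ := by simp
  exact ⟨{ Q := Q
           F₁ := L
           F₂ := F₂
           full := inferInstance
           faithful := inferInstance
           iso := Localization.Lifting.iso L W F F₂
           dense := inferInstance }⟩

lemma sm_of_fact (t : TriangleFactorization F) : SM F := by
  obtain ⟨Q, F₁, F₂, full, faithful, iso⟩ := t
  haveI := full; haveI := faithful
  intro X Y u hsm
  haveI hs : IsSplitMono (F₂.map (F₁.map u)) := by
    refine ⟨⟨{ retraction := iso.hom.app Y ≫ retraction (F.map u) ≫ iso.inv.app X,
               id := ?_ }⟩⟩
    have n := iso.hom.naturality u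
    simp only [Functor.comp_map] at n
    rw [← Category.assoc, n, Category.assoc, ← Category.assoc (F.map u),
      IsSplitMono.id, Category.id_comp, Iso.hom_inv_id_app]
    rfl
  obtain ⟨Z, v, w, hT⟩ := Pretriangulated.distinguished_cocone_triangle (F₁.map u)
  have hw0 : (F₂.mapTriangle.obj (Triangle.mk (F₁.map u) v w)).mor₃ = 0 :=
    Triangle.mor₃_eq_zero_of_mono₁ _ (F₂.map_distinguished _ hT)
      (inferInstance : Mono (F₂.map (F₁.map u)))
  have hw : F₂.map w = 0 := by
    rw [← cancel_mono ((F₂.commShiftIso (1 : ℤ)).hom.app (F₁.obj X)), zero_comp]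
    exact hw0
  have hwA : w = 0 := F₂.map_injective (by rw [hw, Functor.map_zero])
  haveI hsm₁ : IsSplitMono (F₁.map u) := isSplitMono₁ _ hT hwA
  refine ⟨F₁.preimage (retraction (F₁.map u)), ?_⟩
  have h1 : F₁.map (u ≫ F₁.preimage (retraction (F₁.map u))) = 𝟙 _ := by
    rw [Functor.map_comp, Functor.map_preimage, IsSplitMono.id]
  have n := iso.hom.naturality (u ≫ F₁.preimage (retraction (F₁.map u)))
  simp only [Functor.comp_map] at n
  rw [h1, CategoryTheory.Functor.map_id] at n
  rw [← cancel_epi (iso.hom.app X), ← n]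
  simp

end Main

end Stmt17Aux

/-- A triangle functor satisfies (SM) iff it factors as a full triangle functor
followed by a faithful triangle functor; moreover in that case the first functor
may be chosen to be full and dense. -/
theorem stmt17 (F : A ⥤ B) [F.CommShift ℤ] [F.IsTriangulated] :
    ((∀ (X Y : A) (u : X ⟶ Y), IsSplitMono (F.map u) →
        ∃ u' : Y ⟶ X, F.map (u ≫ u') = 𝟙 (F.obj X)) ↔
      Nonempty (TriangleFactorization F)) ∧
    ((∀ (X Y : A) (u : X ⟶ Y), IsSplitMono (F.map u) →
        ∃ u' : Y ⟶ X, F.map (u ≫ u') = 𝟙 (F.obj X)) →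
      Nonempty (DenseTriangleFactorization F)) := by
  constructor
  · constructor
    · intro hSM
      obtain ⟨d⟩ := Stmt17Aux.exists_dense F hSM
      exact ⟨d.toTriangleFactorization⟩
    · rintro ⟨t⟩
      exact Stmt17Aux.sm_of_fact t
  · intro hSM
    exact Stmt17Aux.exists_dense F hSM
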